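/- arXiv:1004.2140 — 2 statements merged into one kernel-verified Lean document; each statement's English description precedes it below -/
import Mathlib

section
/- Let W(x,y,z) = x^3 + y^3 + z^3 + s·xyz with 1 + s^3/27 ≠ 0. Then the Jacobi ring ℂ[x,y,z]/(3x^2+syz, 3y^2+sxz, 3z^2+sxy) is an 8-dimensional complex vector space with basis the images of the monomials 1, x, y, z, xy, yz, xz, xyz. -/
set_option maxHeartbeats 1000000

open MvPolynomial

@[ext] structure JR (t : ℂ) where
  c0 : ℂ
  c1 : ℂ
  c2 : ℂ
  c3 : ℂ
  c4 : ℂ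
  c5 : ℂ
  c6 : ℂ
  c7 : ℂ

namespace JR

variable {t : ℂ}

instance : Zero (JR t) := ⟨⟨0,0,0,0,0,0,0,0⟩⟩
instance : One (JR t) := ⟨⟨1,0,0,0,0,0,0,0⟩⟩
instance : Add (JR t) := ⟨fun a b => ⟨a.c0+b.c0, a.c1+b.c1, a.c2+b.c2, a.c3+b.c3,
  a.c4+b.c4, a.c5+b.c5, a.c6+b.c6, a.c7+b.c7⟩⟩
instance : Neg (JR t) := ⟨fun a => ⟨-a.c0,-a.c1,-a.c2,-a.c3,-a.c4,-a.c5,-a.c6,-a.c7⟩⟩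
instance : SMul ℂ (JR t) := ⟨fun r a => ⟨r*a.c0, r*a.c1, r*a.c2, r*a.c3, r*a.c4, r*a.c5, r*a.c6, r*a.c7⟩⟩
instance : Mul (JR t) := ⟨fun a b =>
  ⟨a.c0*b.c0,
   a.c0*b.c1 + a.c1*b.c0,
   a.c0*b.c2 + a.c2*b.c0,
   a.c0*b.c3 + a.c3*b.c0,
   a.c0*b.c4 + a.c4*b.c0 + a.c1*b.c2 + a.c2*b.c1 + t*(a.c3*b.c3),
   a.c0*b.c5 + a.c5*b.c0 + a.c2*b.c3 + a.c3*b.c2 + t*(a.c1*b.c1),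
   a.c0*b.c6 + a.c6*b.c0 + a.c1*b.c3 + a.c3*b.c1 + t*(a.c2*b.c2),
   a.c0*b.c7 + a.c7*b.c0 + a.c1*b.c5 + a.c5*b.c1 + a.c2*b.c6 + a.c6*b.c2 + a.c3*b.c4 + a.c4*b.c3⟩⟩

@[simp] lemma zero_c0 : (0 : JR t).c0 = 0 := rfl
@[simp] lemma zero_c1 : (0 : JR t).c1 = 0 := rfl
@[simp] lemma zero_c2 : (0 : JR t).c2 = 0 := rfl
@[simp] lemma zero_c3 : (0 : JR t).c3 = 0 := rfl
@[simp] lemma zero_c4 : (0 : JR t).c4 = 0 := rfl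
@[simp] lemma zero_c5 : (0 : JR t).c5 = 0 := rfl
@[simp] lemma zero_c6 : (0 : JR t).c6 = 0 := rfl
@[simp] lemma zero_c7 : (0 : JR t).c7 = 0 := rfl
@[simp] lemma one_c0 : (1 : JR t).c0 = 1 := rfl
@[simp] lemma one_c1 : (1 : JR t).c1 = 0 := rfl
@[simp] lemma one_c2 : (1 : JR t).c2 = 0 := rfl
@[simp] lemma one_c3 : (1 : JR t).c3 = 0 := rfl
@[simp] lemma one_c4 : (1 : JR t).c4 = 0 := rfl
@[simp] lemma one_c5 : (1 : JR t).c5 = 0 := rfl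
@[simp] lemma one_c6 : (1 : JR t).c6 = 0 := rfl
@[simp] lemma one_c7 : (1 : JR t).c7 = 0 := rfl
@[simp] lemma add_c0 (a b : JR t) : (a+b).c0 = a.c0+b.c0 := rfl
@[simp] lemma add_c1 (a b : JR t) : (a+b).c1 = a.c1+b.c1 := rfl
@[simp] lemma add_c2 (a b : JR t) : (a+b).c2 = a.c2+b.c2 := rfl
@[simp] lemma add_c3 (a b : JR t) : (a+b).c3 = a.c3+b.c3 := rfl
@[simp] lemma add_c4 (a b : JR t) : (a+b).c4 = a.c4+b.c4 := rfl
@[simp] lemma add_c5 (a b : JR t) : (a+b).c5 = a.c5+b.c5 := rfl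
@[simp] lemma add_c6 (a b : JR t) : (a+b).c6 = a.c6+b.c6 := rfl
@[simp] lemma add_c7 (a b : JR t) : (a+b).c7 = a.c7+b.c7 := rfl
@[simp] lemma neg_c0 (a : JR t) : (-a).c0 = -a.c0 := rfl
@[simp] lemma neg_c1 (a : JR t) : (-a).c1 = -a.c1 := rfl
@[simp] lemma neg_c2 (a : JR t) : (-a).c2 = -a.c2 := rfl
@[simp] lemma neg_c3 (a : JR t) : (-a).c3 = -a.c3 := rfl
@[simp] lemma neg_c4 (a : JR t) : (-a).c4 = -a.c4 := rfl
@[simp] lemma neg_c5 (a : JR t) : (-a).c5 = -a.c5 := rfl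
@[simp] lemma neg_c6 (a : JR t) : (-a).c6 = -a.c6 := rfl
@[simp] lemma neg_c7 (a : JR t) : (-a).c7 = -a.c7 := rfl
@[simp] lemma smul_c0 (r : ℂ) (a : JR t) : (r • a).c0 = r*a.c0 := rfl
@[simp] lemma smul_c1 (r : ℂ) (a : JR t) : (r • a).c1 = r*a.c1 := rfl
@[simp] lemma smul_c2 (r : ℂ) (a : JR t) : (r • a).c2 = r*a.c2 := rfl
@[simp] lemma smul_c3 (r : ℂ) (a : JR t) : (r • a).c3 = r*a.c3 := rfl
@[simp] lemma smul_c4 (r : ℂ) (a : JR t) : (r • a).c4 = r*a.c4 := rfl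
@[simp] lemma smul_c5 (r : ℂ) (a : JR t) : (r • a).c5 = r*a.c5 := rfl
@[simp] lemma smul_c6 (r : ℂ) (a : JR t) : (r • a).c6 = r*a.c6 := rfl
@[simp] lemma smul_c7 (r : ℂ) (a : JR t) : (r • a).c7 = r*a.c7 := rfl
@[simp] lemma mul_c0 (a b : JR t) : (a*b).c0 = a.c0*b.c0 := rfl
@[simp] lemma mul_c1 (a b : JR t) : (a*b).c1 = a.c0*b.c1 + a.c1*b.c0 := rfl
@[simp] lemma mul_c2 (a b : JR t) : (a*b).c2 = a.c0*b.c2 + a.c2*b.c0 := rfl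
@[simp] lemma mul_c3 (a b : JR t) : (a*b).c3 = a.c0*b.c3 + a.c3*b.c0 := rfl
@[simp] lemma mul_c4 (a b : JR t) : (a*b).c4 = a.c0*b.c4 + a.c4*b.c0 + a.c1*b.c2 + a.c2*b.c1 + t*(a.c3*b.c3) := rfl
@[simp] lemma mul_c5 (a b : JR t) : (a*b).c5 = a.c0*b.c5 + a.c5*b.c0 + a.c2*b.c3 + a.c3*b.c2 + t*(a.c1*b.c1) := rfl
@[simp] lemma mul_c6 (a b : JR t) : (a*b).c6 = a.c0*b.c6 + a.c6*b.c0 + a.c1*b.c3 + a.c3*b.c1 + t*(a.c2*b.c2) := rfl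
@[simp] lemma mul_c7 (a b : JR t) : (a*b).c7 = a.c0*b.c7 + a.c7*b.c0 + a.c1*b.c5 + a.c5*b.c1 + a.c2*b.c6 + a.c6*b.c2 + a.c3*b.c4 + a.c4*b.c3 := rfl

def embFun (t : ℂ) (r : ℂ) : JR t := ⟨r,0,0,0,0,0,0,0⟩

@[simp] lemma embFun_c0 (r : ℂ) : (embFun t r).c0 = r := rfl
@[simp] lemma embFun_c1 (r : ℂ) : (embFun t r).c1 = 0 := rfl
@[simp] lemma embFun_c2 (r : ℂ) : (embFun t r).c2 = 0 := rfl
@[simp] lemma embFun_c3 (r : ℂ) : (embFun t r).c3 = 0 := rfl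
@[simp] lemma embFun_c4 (r : ℂ) : (embFun t r).c4 = 0 := rfl
@[simp] lemma embFun_c5 (r : ℂ) : (embFun t r).c5 = 0 := rfl
@[simp] lemma embFun_c6 (r : ℂ) : (embFun t r).c6 = 0 := rfl
@[simp] lemma embFun_c7 (r : ℂ) : (embFun t r).c7 = 0 := rfl

instance : NatCast (JR t) := ⟨fun n => embFun t n⟩
instance : IntCast (JR t) := ⟨fun z => embFun t z⟩

@[simp] lemma natCast_c0 (n : ℕ) : ((n : ℕ) : JR t).c0 = n := rfl
@[simp] lemma natCast_c1 (n : ℕ) : ((n : ℕ) : JR t).c1 = 0 := rfl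
@[simp] lemma natCast_c2 (n : ℕ) : ((n : ℕ) : JR t).c2 = 0 := rfl
@[simp] lemma natCast_c3 (n : ℕ) : ((n : ℕ) : JR t).c3 = 0 := rfl
@[simp] lemma natCast_c4 (n : ℕ) : ((n : ℕ) : JR t).c4 = 0 := rfl
@[simp] lemma natCast_c5 (n : ℕ) : ((n : ℕ) : JR t).c5 = 0 := rfl
@[simp] lemma natCast_c6 (n : ℕ) : ((n : ℕ) : JR t).c6 = 0 := rfl
@[simp] lemma natCast_c7 (n : ℕ) : ((n : ℕ) : JR t).c7 = 0 := rfl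
@[simp] lemma intCast_c0 (n : ℤ) : ((n : ℤ) : JR t).c0 = n := rfl
@[simp] lemma intCast_c1 (n : ℤ) : ((n : ℤ) : JR t).c1 = 0 := rfl
@[simp] lemma intCast_c2 (n : ℤ) : ((n : ℤ) : JR t).c2 = 0 := rfl
@[simp] lemma intCast_c3 (n : ℤ) : ((n : ℤ) : JR t).c3 = 0 := rfl
@[simp] lemma intCast_c4 (n : ℤ) : ((n : ℤ) : JR t).c4 = 0 := rfl
@[simp] lemma intCast_c5 (n : ℤ) : ((n : ℤ) : JR t).c5 = 0 := rfl
@[simp] lemma intCast_c6 (n : ℤ) : ((n : ℤ) : JR t).c6 = 0 := rfl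
@[simp] lemma intCast_c7 (n : ℤ) : ((n : ℤ) : JR t).c7 = 0 := rfl

instance : CommRing (JR t) where
  natCast n := (n : JR t)
  natCast_zero := by ext <;> simp
  natCast_succ n := by ext <;> simp
  intCast z := (z : JR t)
  intCast_ofNat n := by ext <;> simp
  intCast_negSucc n := by ext <;> simp [Int.cast_negSucc]
  add_assoc a b c := by ext <;> simp <;> ring
  zero_add a := by ext <;> simp
  add_zero a := by ext <;> simp
  add_comm a b := by ext <;> simp <;> ring
  neg_add_cancel a := by ext <;> simp
  left_distrib a b c := by ext <;> simp <;> ring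
  right_distrib a b c := by ext <;> simp <;> ring
  zero_mul a := by ext <;> simp
  mul_zero a := by ext <;> simp
  mul_assoc a b c := by ext <;> simp <;> ring
  one_mul a := by ext <;> simp
  mul_one a := by ext <;> simp
  mul_comm a b := by ext <;> simp <;> ring
  nsmul := nsmulRec
  zsmul := zsmulRec

@[simp] lemma ofNat_c0 (n : ℕ) [n.AtLeastTwo] : (OfNat.ofNat n : JR t).c0 = OfNat.ofNat n := by
  show ((OfNat.ofNat n : ℕ) : ℂ) = _; simp
@[simp] lemma ofNat_c1 (n : ℕ) [n.AtLeastTwo] : (OfNat.ofNat n : JR t).c1 = 0 := rfl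
@[simp] lemma ofNat_c2 (n : ℕ) [n.AtLeastTwo] : (OfNat.ofNat n : JR t).c2 = 0 := rfl
@[simp] lemma ofNat_c3 (n : ℕ) [n.AtLeastTwo] : (OfNat.ofNat n : JR t).c3 = 0 := rfl
@[simp] lemma ofNat_c4 (n : ℕ) [n.AtLeastTwo] : (OfNat.ofNat n : JR t).c4 = 0 := rfl
@[simp] lemma ofNat_c5 (n : ℕ) [n.AtLeastTwo] : (OfNat.ofNat n : JR t).c5 = 0 := rfl
@[simp] lemma ofNat_c6 (n : ℕ) [n.AtLeastTwo] : (OfNat.ofNat n : JR t).c6 = 0 := rfl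
@[simp] lemma ofNat_c7 (n : ℕ) [n.AtLeastTwo] : (OfNat.ofNat n : JR t).c7 = 0 := rfl

def emb (t : ℂ) : ℂ →+* JR t where
  toFun r := embFun t r
  map_one' := by ext <;> simp
  map_mul' x y := by ext <;> simp
  map_zero' := by ext <;> simp
  map_add' x y := by ext <;> simp

@[simp] lemma emb_c0 (r : ℂ) : (emb t r).c0 = r := rfl
@[simp] lemma emb_c1 (r : ℂ) : (emb t r).c1 = 0 := rfl
@[simp] lemma emb_c2 (r : ℂ) : (emb t r).c2 = 0 := rfl
@[simp] lemma emb_c3 (r : ℂ) : (emb t r).c3 = 0 := rfl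
@[simp] lemma emb_c4 (r : ℂ) : (emb t r).c4 = 0 := rfl
@[simp] lemma emb_c5 (r : ℂ) : (emb t r).c5 = 0 := rfl
@[simp] lemma emb_c6 (r : ℂ) : (emb t r).c6 = 0 := rfl
@[simp] lemma emb_c7 (r : ℂ) : (emb t r).c7 = 0 := rfl

instance : Algebra ℂ (JR t) where
  algebraMap := emb t
  commutes' r x := by ext <;> simp <;> ring
  smul_def' r x := by ext <;> simp

@[simp] lemma algebraMap_c0 (r : ℂ) : (algebraMap ℂ (JR t) r).c0 = r := rfl
@[simp] lemma algebraMap_c1 (r : ℂ) : (algebraMap ℂ (JR t) r).c1 = 0 := rfl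
@[simp] lemma algebraMap_c2 (r : ℂ) : (algebraMap ℂ (JR t) r).c2 = 0 := rfl
@[simp] lemma algebraMap_c3 (r : ℂ) : (algebraMap ℂ (JR t) r).c3 = 0 := rfl
@[simp] lemma algebraMap_c4 (r : ℂ) : (algebraMap ℂ (JR t) r).c4 = 0 := rfl
@[simp] lemma algebraMap_c5 (r : ℂ) : (algebraMap ℂ (JR t) r).c5 = 0 := rfl
@[simp] lemma algebraMap_c6 (r : ℂ) : (algebraMap ℂ (JR t) r).c6 = 0 := rfl
@[simp] lemma algebraMap_c7 (r : ℂ) : (algebraMap ℂ (JR t) r).c7 = 0 := rfl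

/-- coordinates, as a linear map -/
def coords : JR t →ₗ[ℂ] (Fin 8 → ℂ) where
  toFun a := ![a.c0, a.c1, a.c2, a.c3, a.c4, a.c5, a.c6, a.c7]
  map_add' a b := by funext j; fin_cases j <;> rfl
  map_smul' r a := by funext j; fin_cases j <;> rfl

end JR



section Aux

lemma unit_cancel {I : Ideal (MvPolynomial (Fin 3) ℂ)} {a : ℂ} (ha : a ≠ 0)
    {p : MvPolynomial (Fin 3) ℂ} (h : C a * p ∈ I) : p ∈ I := by
  have h2 := I.mul_mem_left (C a⁻¹) h
  rwa [← mul_assoc, ← C_mul, inv_mul_cancel₀ ha, C_1, one_mul] at h2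

lemma mk_smul (I : Ideal (MvPolynomial (Fin 3) ℂ)) (a : ℂ) (p : MvPolynomial (Fin 3) ℂ) :
    a • Ideal.Quotient.mk I p = Ideal.Quotient.mk I (C a * p) := by
  rw [← smul_eq_C_mul]
  exact (map_smul (Ideal.Quotient.mkₐ ℂ I) a p).symm

end Aux

/-- For `W = x³+y³+z³+s·xyz` with `1+s³/27 ≠ 0`, the Jacobi ring
`ℂ[x,y,z]/(3x²+syz, 3y²+sxz, 3z²+sxy)` is an 8-dimensional complex vector space
with basis the images of `1, x, y, z, xy, yz, xz, xyz`. -/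
theorem stmt2 (s : ℂ) (hs : 1 + s ^ 3 / 27 ≠ 0)
    (I : Ideal (MvPolynomial (Fin 3) ℂ))
    (hI : I = Ideal.span
      { 3 * X 0 ^ 2 + C s * X 1 * X 2,
        3 * X 1 ^ 2 + C s * X 0 * X 2,
        3 * X 2 ^ 2 + C s * X 0 * X 1 })
    (φ : Fin 8 → MvPolynomial (Fin 3) ℂ)
    (hφ : φ = ![1, X 0, X 1, X 2, X 0 * X 1, X 1 * X 2, X 0 * X 2, X 0 * X 1 * X 2]) :
    Module.finrank ℂ (MvPolynomial (Fin 3) ℂ ⧸ I) = 8 ∧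
      LinearIndependent ℂ (fun i => Ideal.Quotient.mk I (φ i)) ∧
      Submodule.span ℂ (Set.range fun i => Ideal.Quotient.mk I (φ i)) = ⊤ := by
  subst hφ
  have h27 : (27:ℂ) + s^3 ≠ 0 := by
    intro h
    exact hs (by rw [show (1:ℂ) + s^3/27 = (27+s^3)/27 by ring, h, zero_div])
  -- generators
  have hg1I : (3 * X 0 ^ 2 + C s * X 1 * X 2 : MvPolynomial (Fin 3) ℂ) ∈ I := by
    rw [hI]; exact Ideal.subset_span (by simp)
  have hg2I : (3 * X 1 ^ 2 + C s * X 0 * X 2 : MvPolynomial (Fin 3) ℂ) ∈ I := by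
    rw [hI]; exact Ideal.subset_span (by simp)
  have hg3I : (3 * X 2 ^ 2 + C s * X 0 * X 1 : MvPolynomial (Fin 3) ℂ) ∈ I := by
    rw [hI]; exact Ideal.subset_span (by simp)
  -- mixed cubic monomials lie in I
  have cyc : ∀ p : MvPolynomial (Fin 3) ℂ,
      (∃ q1 q2 q3, C (27 + s^3) * p =
        q1 * (3 * X 0 ^ 2 + C s * X 1 * X 2) + q2 * (3 * X 1 ^ 2 + C s * X 0 * X 2)
          + q3 * (3 * X 2 ^ 2 + C s * X 0 * X 1)) → p ∈ I := by
    rintro p ⟨q1, q2, q3, h⟩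
    refine unit_cancel h27 ?_
    rw [h]
    exact add_mem (add_mem (I.mul_mem_left _ hg1I) (I.mul_mem_left _ hg2I)) (I.mul_mem_left _ hg3I)
  have hx2y : (X 0^2 * X 1 : MvPolynomial (Fin 3) ℂ) ∈ I := by
    refine cyc _ ⟨9 * X 1, -(3 * C s * X 2), C s^2 * X 0, ?_⟩
    simp only [map_add, map_pow, map_ofNat]; ring
  have hy2z : (X 1^2 * X 2 : MvPolynomial (Fin 3) ℂ) ∈ I := by
    refine cyc _ ⟨C s^2 * X 1, 9 * X 2, -(3 * C s * X 0), ?_⟩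
    simp only [map_add, map_pow, map_ofNat]; ring
  have hxz2 : (X 0 * X 2^2 : MvPolynomial (Fin 3) ℂ) ∈ I := by
    refine cyc _ ⟨-(3 * C s * X 1), C s^2 * X 2, 9 * X 0, ?_⟩
    simp only [map_add, map_pow, map_ofNat]; ring
  have hx2z : (X 0^2 * X 2 : MvPolynomial (Fin 3) ℂ) ∈ I := by
    refine cyc _ ⟨9 * X 2, C s^2 * X 0, -(3 * C s * X 1), ?_⟩
    simp only [map_add, map_pow, map_ofNat]; ring
  have hyz2 : (X 1 * X 2^2 : MvPolynomial (Fin 3) ℂ) ∈ I := by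
    refine cyc _ ⟨C s^2 * X 2, -(3 * C s * X 0), 9 * X 1, ?_⟩
    simp only [map_add, map_pow, map_ofNat]; ring
  have hxy2 : (X 0 * X 1^2 : MvPolynomial (Fin 3) ℂ) ∈ I := by
    refine cyc _ ⟨-(3 * C s * X 2), 9 * X 0, C s^2 * X 1, ?_⟩
    simp only [map_add, map_pow, map_ofNat]; ring
  -- the span of the eight monomial classes
  set N : Submodule ℂ (MvPolynomial (Fin 3) ℂ ⧸ I) :=
    Submodule.span ℂ (Set.range fun i => Ideal.Quotient.mk I
      (![1, X 0, X 1, X 2, X 0 * X 1, X 1 * X 2, X 0 * X 2, X 0 * X 1 * X 2] i)) with hN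
  have m0 : Ideal.Quotient.mk I 1 ∈ N := Submodule.subset_span ⟨0, rfl⟩
  have m1 : Ideal.Quotient.mk I (X 0) ∈ N := Submodule.subset_span ⟨1, rfl⟩
  have m2 : Ideal.Quotient.mk I (X 1) ∈ N := Submodule.subset_span ⟨2, rfl⟩
  have m3 : Ideal.Quotient.mk I (X 2) ∈ N := Submodule.subset_span ⟨3, rfl⟩
  have m4 : Ideal.Quotient.mk I (X 0 * X 1) ∈ N := Submodule.subset_span ⟨4, rfl⟩
  have m5 : Ideal.Quotient.mk I (X 1 * X 2) ∈ N := Submodule.subset_span ⟨5, rfl⟩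
  have m6 : Ideal.Quotient.mk I (X 0 * X 2) ∈ N := Submodule.subset_span ⟨6, rfl⟩
  have m7 : Ideal.Quotient.mk I (X 0 * X 1 * X 2) ∈ N := Submodule.subset_span ⟨7, rfl⟩
  have hzeroN : ∀ p ∈ I, Ideal.Quotient.mk I p ∈ N := by
    intro p hp
    rw [Ideal.Quotient.eq_zero_iff_mem.mpr hp]
    exact N.zero_mem
  -- squares
  have hsq : ∀ (i j k : Fin 3), (3 * X i ^ 2 + C s * X j * X k : MvPolynomial (Fin 3) ℂ) ∈ I →
      Ideal.Quotient.mk I (X j * X k) ∈ N → Ideal.Quotient.mk I (X i * X i) ∈ N := by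
    intro i j k hgen hjk
    have h0 : (3:ℂ) • Ideal.Quotient.mk I (X i * X i) + s • Ideal.Quotient.mk I (X j * X k) = 0 := by
      rw [mk_smul, mk_smul, ← map_add, show (C 3 * (X i * X i) + C s * (X j * X k) : MvPolynomial (Fin 3) ℂ)
        = 3 * X i ^ 2 + C s * X j * X k by simp only [map_ofNat]; ring]
      exact Ideal.Quotient.eq_zero_iff_mem.mpr hgen
    have h1 : (3:ℂ) • Ideal.Quotient.mk I (X i * X i) = -(s • Ideal.Quotient.mk I (X j * X k)) :=
      eq_neg_of_add_eq_zero_left h0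
    have h2 : Ideal.Quotient.mk I (X i * X i) = (3:ℂ)⁻¹ • (-(s • Ideal.Quotient.mk I (X j * X k))) := by
      rw [← h1, smul_smul, inv_mul_cancel₀ (by norm_num : (3:ℂ) ≠ 0), one_smul]
    rw [h2]
    exact N.smul_mem _ (N.neg_mem (N.smul_mem _ hjk))
  -- spanning
  have hspanTop : N = ⊤ := by
    rw [eq_top_iff]
    rintro x -
    obtain ⟨p, rfl⟩ := Ideal.Quotient.mk_surjective x
    induction p using MvPolynomial.induction_on with
    | C a =>
        rw [show (Ideal.Quotient.mk I) (C a) = a • Ideal.Quotient.mk I 1 by rw [mk_smul, mul_one]]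
        exact N.smul_mem _ m0
    | add p q hp hq =>
        rw [map_add]; exact N.add_mem hp hq
    | mul_X p i hp =>
        rw [map_mul]
        have key : ∀ w ∈ N, w * (Ideal.Quotient.mk I) (X i) ∈ N := by
          intro w hw
          induction hw using Submodule.span_induction with
          | zero => rw [zero_mul]; exact N.zero_mem
          | add u v _ _ hu hv => rw [add_mul]; exact N.add_mem hu hv
          | smul a u _ hu => rw [smul_mul_assoc]; exact N.smul_mem a hu
          | mem u hu =>
              obtain ⟨j, rfl⟩ := hu
              simp only []
              rw [← map_mul]
              fin_cases j <;> fin_cases i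
              · show Ideal.Quotient.mk I (1 * X 0) ∈ N
                rw [one_mul]; exact m1
              · show Ideal.Quotient.mk I (1 * X 1) ∈ N
                rw [one_mul]; exact m2
              · show Ideal.Quotient.mk I (1 * X 2) ∈ N
                rw [one_mul]; exact m3
              · show Ideal.Quotient.mk I (X 0 * X 0) ∈ N
                exact hsq 0 1 2 hg1I m5
              · show Ideal.Quotient.mk I (X 0 * X 1) ∈ N
                exact m4
              · show Ideal.Quotient.mk I (X 0 * X 2) ∈ N
                exact m6
              · show Ideal.Quotient.mk I (X 1 * X 0) ∈ N
                rw [show (X 1 * X 0 : MvPolynomial (Fin 3) ℂ) = X 0 * X 1 by ring]; exact m4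
              · show Ideal.Quotient.mk I (X 1 * X 1) ∈ N
                exact hsq 1 0 2 hg2I m6
              · show Ideal.Quotient.mk I (X 1 * X 2) ∈ N
                exact m5
              · show Ideal.Quotient.mk I (X 2 * X 0) ∈ N
                rw [show (X 2 * X 0 : MvPolynomial (Fin 3) ℂ) = X 0 * X 2 by ring]; exact m6
              · show Ideal.Quotient.mk I (X 2 * X 1) ∈ N
                rw [show (X 2 * X 1 : MvPolynomial (Fin 3) ℂ) = X 1 * X 2 by ring]; exact m5
              · show Ideal.Quotient.mk I (X 2 * X 2) ∈ N
                exact hsq 2 0 1 hg3I m4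
              · show Ideal.Quotient.mk I (X 0 * X 1 * X 0) ∈ N
                refine hzeroN _ ?_
                rw [show (X 0 * X 1 * X 0 : MvPolynomial (Fin 3) ℂ) = X 0^2 * X 1 by ring]
                exact hx2y
              · show Ideal.Quotient.mk I (X 0 * X 1 * X 1) ∈ N
                refine hzeroN _ ?_
                rw [show (X 0 * X 1 * X 1 : MvPolynomial (Fin 3) ℂ) = X 0 * X 1^2 by ring]
                exact hxy2
              · show Ideal.Quotient.mk I (X 0 * X 1 * X 2) ∈ N
                exact m7
              · show Ideal.Quotient.mk I (X 1 * X 2 * X 0) ∈ N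
                rw [show (X 1 * X 2 * X 0 : MvPolynomial (Fin 3) ℂ) = X 0 * X 1 * X 2 by ring]
                exact m7
              · show Ideal.Quotient.mk I (X 1 * X 2 * X 1) ∈ N
                refine hzeroN _ ?_
                rw [show (X 1 * X 2 * X 1 : MvPolynomial (Fin 3) ℂ) = X 1^2 * X 2 by ring]
                exact hy2z
              · show Ideal.Quotient.mk I (X 1 * X 2 * X 2) ∈ N
                refine hzeroN _ ?_
                rw [show (X 1 * X 2 * X 2 : MvPolynomial (Fin 3) ℂ) = X 1 * X 2^2 by ring]
                exact hyz2
              · show Ideal.Quotient.mk I (X 0 * X 2 * X 0) ∈ N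
                refine hzeroN _ ?_
                rw [show (X 0 * X 2 * X 0 : MvPolynomial (Fin 3) ℂ) = X 0^2 * X 2 by ring]
                exact hx2z
              · show Ideal.Quotient.mk I (X 0 * X 2 * X 1) ∈ N
                rw [show (X 0 * X 2 * X 1 : MvPolynomial (Fin 3) ℂ) = X 0 * X 1 * X 2 by ring]
                exact m7
              · show Ideal.Quotient.mk I (X 0 * X 2 * X 2) ∈ N
                refine hzeroN _ ?_
                rw [show (X 0 * X 2 * X 2 : MvPolynomial (Fin 3) ℂ) = X 0 * X 2^2 by ring]
                exact hxz2
              · show Ideal.Quotient.mk I (X 0 * X 1 * X 2 * X 0) ∈ N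
                refine hzeroN _ ?_
                rw [show (X 0 * X 1 * X 2 * X 0 : MvPolynomial (Fin 3) ℂ) = X 2 * (X 0^2 * X 1) by ring]
                exact I.mul_mem_left _ hx2y
              · show Ideal.Quotient.mk I (X 0 * X 1 * X 2 * X 1) ∈ N
                refine hzeroN _ ?_
                rw [show (X 0 * X 1 * X 2 * X 1 : MvPolynomial (Fin 3) ℂ) = X 0 * (X 1^2 * X 2) by ring]
                exact I.mul_mem_left _ hy2z
              · show Ideal.Quotient.mk I (X 0 * X 1 * X 2 * X 2) ∈ N
                refine hzeroN _ ?_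
                rw [show (X 0 * X 1 * X 2 * X 2 : MvPolynomial (Fin 3) ℂ) = X 1 * (X 0 * X 2^2) by ring]
                exact I.mul_mem_left _ hxz2
        exact key _ hp
  -- the model algebra
  set v : Fin 3 → JR (-(s/3)) :=
    ![⟨0,1,0,0,0,0,0,0⟩, ⟨0,0,1,0,0,0,0,0⟩, ⟨0,0,0,1,0,0,0,0⟩] with hv
  set π : MvPolynomial (Fin 3) ℂ →ₐ[ℂ] JR (-(s/3)) := aeval v with hπ
  have p1 : π (X 0) = (⟨0,1,0,0,0,0,0,0⟩ : JR (-(s/3))) := by rw [hπ, aeval_X, hv]; rfl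
  have p2 : π (X 1) = (⟨0,0,1,0,0,0,0,0⟩ : JR (-(s/3))) := by rw [hπ, aeval_X, hv]; rfl
  have p3 : π (X 2) = (⟨0,0,0,1,0,0,0,0⟩ : JR (-(s/3))) := by rw [hπ, aeval_X, hv]; rfl
  have q4 : π (X 0 * X 1) = (⟨0,0,0,0,1,0,0,0⟩ : JR (-(s/3))) := by
    rw [map_mul, p1, p2]; ext <;> simp
  have q5 : π (X 1 * X 2) = (⟨0,0,0,0,0,1,0,0⟩ : JR (-(s/3))) := by
    rw [map_mul, p2, p3]; ext <;> simp
  have q6 : π (X 0 * X 2) = (⟨0,0,0,0,0,0,1,0⟩ : JR (-(s/3))) := by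
    rw [map_mul, p1, p3]; ext <;> simp
  have q7 : π (X 0 * X 1 * X 2) = (⟨0,0,0,0,0,0,0,1⟩ : JR (-(s/3))) := by
    rw [map_mul, q4, p3]; ext <;> simp
  have hkill : ∀ a ∈ I, π a = 0 := by
    have hsub : I ≤ RingHom.ker π.toRingHom := by
      rw [hI, Ideal.span_le]
      rintro p hp
      simp only [Set.mem_insert_iff, Set.mem_singleton_iff] at hp
      have hcomp : ∀ q : MvPolynomial (Fin 3) ℂ, π q = 0 →
          q ∈ (RingHom.ker π.toRingHom : Ideal _) := fun q hq => hq
      rcases hp with rfl | rfl | rfl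
      · refine hcomp _ ?_
        rw [show (3 : MvPolynomial (Fin 3) ℂ) = C 3 from
          (map_ofNat (C : ℂ →+* MvPolynomial (Fin 3) ℂ) 3).symm]
        rw [map_add, map_mul, map_pow, map_mul, map_mul, p1, p2, p3,
          show π (C 3) = algebraMap ℂ _ 3 from by rw [hπ]; exact aeval_C _ _,
          show π (C s) = algebraMap ℂ _ s from by rw [hπ]; exact aeval_C _ _]
        ext <;> simp [pow_two] <;> ring
      · refine hcomp _ ?_
        rw [show (3 : MvPolynomial (Fin 3) ℂ) = C 3 from
          (map_ofNat (C : ℂ →+* MvPolynomial (Fin 3) ℂ) 3).symm]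
        rw [map_add, map_mul, map_pow, map_mul, map_mul, p1, p2, p3,
          show π (C 3) = algebraMap ℂ _ 3 from by rw [hπ]; exact aeval_C _ _,
          show π (C s) = algebraMap ℂ _ s from by rw [hπ]; exact aeval_C _ _]
        ext <;> simp [pow_two] <;> ring
      · refine hcomp _ ?_
        rw [show (3 : MvPolynomial (Fin 3) ℂ) = C 3 from
          (map_ofNat (C : ℂ →+* MvPolynomial (Fin 3) ℂ) 3).symm]
        rw [map_add, map_mul, map_pow, map_mul, map_mul, p1, p2, p3,
          show π (C 3) = algebraMap ℂ _ 3 from by rw [hπ]; exact aeval_C _ _,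
          show π (C s) = algebraMap ℂ _ s from by rw [hπ]; exact aeval_C _ _]
        ext <;> simp [pow_two] <;> ring
    intro a ha
    exact hsub ha
  have hind : LinearIndependent ℂ (fun i : Fin 8 => Ideal.Quotient.mk I
      (![1, X 0, X 1, X 2, X 0 * X 1, X 1 * X 2, X 0 * X 2, X 0 * X 1 * X 2] i)) := by
    refine LinearIndependent.of_comp
      (JR.coords.comp (Ideal.Quotient.liftₐ I π hkill).toLinearMap) ?_
    have heq : (⇑(JR.coords.comp (Ideal.Quotient.liftₐ I π hkill).toLinearMap) ∘
        fun i : Fin 8 => Ideal.Quotient.mk I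
          (![1, X 0, X 1, X 2, X 0 * X 1, X 1 * X 2, X 0 * X 2, X 0 * X 1 * X 2] i)) =
        fun i : Fin 8 => Pi.single i (1:ℂ) := by
      funext j
      simp only [Function.comp_apply, LinearMap.comp_apply, AlgHom.toLinearMap_apply,
        Ideal.Quotient.liftₐ_apply, Ideal.Quotient.lift_mk, AlgHom.coe_toRingHom,
        RingHom.coe_coe]
      fin_cases j
      · show JR.coords (π 1) = Pi.single (0 : Fin 8) (1:ℂ)
        rw [map_one]; funext m; fin_cases m <;> rfl
      · show JR.coords (π (X 0)) = Pi.single (1 : Fin 8) (1:ℂ)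
        rw [p1]; funext m; fin_cases m <;> rfl
      · show JR.coords (π (X 1)) = Pi.single (2 : Fin 8) (1:ℂ)
        rw [p2]; funext m; fin_cases m <;> rfl
      · show JR.coords (π (X 2)) = Pi.single (3 : Fin 8) (1:ℂ)
        rw [p3]; funext m; fin_cases m <;> rfl
      · show JR.coords (π (X 0 * X 1)) = Pi.single (4 : Fin 8) (1:ℂ)
        rw [q4]; funext m; fin_cases m <;> rfl
      · show JR.coords (π (X 1 * X 2)) = Pi.single (5 : Fin 8) (1:ℂ)
        rw [q5]; funext m; fin_cases m <;> rfl
      · show JR.coords (π (X 0 * X 2)) = Pi.single (6 : Fin 8) (1:ℂ)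
        rw [q6]; funext m; fin_cases m <;> rfl
      · show JR.coords (π (X 0 * X 1 * X 2)) = Pi.single (7 : Fin 8) (1:ℂ)
        rw [q7]; funext m; fin_cases m <;> rfl
    rw [heq]
    rw [Fintype.linearIndependent_iff]
    intro g hg j
    have h := congrFun hg j
    simpa [Finset.sum_apply, Pi.single_apply] using h
  refine ⟨?_, hind, hspanTop⟩
  have b : Module.Basis (Fin 8) ℂ (MvPolynomial (Fin 3) ℂ ⧸ I) :=
    Module.Basis.mk hind (by rw [← hN]; exact hspanTop.ge)
  rw [Module.finrank_eq_card_basis b, Fintype.card_fin]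
end

section
/- Let g(u) = ₂F₁(1/3, 1/3, 2/3; u) and h(u) = ₂F₁(2/3, 2/3, 4/3; u), and define for s near 0 (with u = -s³/27) the function t(s) = s·h(u)/g(u). Then dt/ds = 1/((1-u)·g(u)²), i.e. for the inverse function s(t) one has ds/dt = (1-u)·g(u)² evaluated at u = -s(t)³/27. -/
/-- The Gauss hypergeometric series `₂F₁(a,b,c;u)`. -/
noncomputable def hyp2F1 (a b c u : ℂ) : ℂ :=
  ∑' n : ℕ, ((∏ i ∈ Finset.range n, (a + i)) * (∏ i ∈ Finset.range n, (b + i)) /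
    ((∏ i ∈ Finset.range n, (c + i)) * (n.factorial : ℂ))) * u ^ n

set_option maxHeartbeats 1000000

open Finset Metric

noncomputable def aa : ℕ → ℝ
  | 0 => 1
  | n+1 => aa n * ((n:ℝ) + 1/3)^2 / (((n:ℝ)+1) * ((n:ℝ) + 2/3))

noncomputable def bb : ℕ → ℝ
  | 0 => 1
  | n+1 => bb n * ((n:ℝ) + 2/3)^2 / (((n:ℝ)+1) * ((n:ℝ) + 4/3))

lemma aa_pos (n : ℕ) : 0 < aa n := by
  induction n with
  | zero => norm_num [aa]
  | succ n ih => rw [aa]; positivity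

lemma bb_pos (n : ℕ) : 0 < bb n := by
  induction n with
  | zero => norm_num [bb]
  | succ n ih => rw [bb]; positivity

lemma aa_le_one (n : ℕ) : aa n ≤ 1 := by
  induction n with
  | zero => norm_num [aa]
  | succ n ih =>
    rw [aa, div_le_one (by positivity)]
    nlinarith [Nat.cast_nonneg (α := ℝ) n, aa_pos n]

lemma bb_le_one (n : ℕ) : bb n ≤ 1 := by
  induction n with
  | zero => norm_num [bb]
  | succ n ih =>
    rw [bb, div_le_one (by positivity)]
    nlinarith [Nat.cast_nonneg (α := ℝ) n, bb_pos n]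

noncomputable def RR (n k : ℕ) : ℝ := aa (n-k) * bb k * (6*(k:ℝ)+1-3*(n:ℝ))

lemma bb_one : bb 1 = 1/3 := by norm_num [bb]

lemma tel (n : ℕ) : ∀ m, m ≤ n →
    ∑ k ∈ range (m+1), (RR (n+1) k - RR n k)
      = -(((m:ℝ)+1)*(3*(m:ℝ)+4)/((n:ℝ)+1)) * aa (n-m) * bb (m+1) := by
  intro m
  induction m with
  | zero =>
    intro _
    have hn1 : ((n:ℝ)+1) ≠ 0 := by positivity
    have hn2 : ((n:ℝ)+2/3) ≠ 0 := by positivity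
    simp only [zero_add, range_one, sum_singleton, RR, Nat.sub_zero, bb_one]
    rw [show aa (n+1) = aa n * ((n:ℝ) + 1/3)^2 / (((n:ℝ)+1) * ((n:ℝ) + 2/3)) from rfl]
    show _ * bb 0 * _ - _ * bb 0 * _ = _
    rw [show bb 0 = 1 from rfl]
    push_cast
    field_simp
    ring
  | succ m ih =>
    intro hm
    have hm' : m ≤ n := le_of_lt (Nat.lt_of_succ_le hm)
    set l := n - (m+1) with hl
    have hnl : n = l + (m+1) := by omega
    have h1 : n - m = l + 1 := by omega
    have h2 : n + 1 - (m+1) = l + 1 := by omega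
    have hcast : (n:ℝ) = (l:ℝ) + (m:ℝ) + 1 := by rw [hnl]; push_cast; ring
    rw [sum_range_succ, ih hm']
    simp only [RR, h1, h2]
    rw [show aa (l+1) = aa l * ((l:ℝ) + 1/3)^2 / (((l:ℝ)+1) * ((l:ℝ) + 2/3)) from rfl,
        show bb (m+1+1) = bb (m+1) * (((m+1:ℕ):ℝ) + 2/3)^2 / ((((m+1:ℕ):ℝ)+1) * (((m+1:ℕ):ℝ) + 4/3)) from rfl,
        hcast]
    push_cast
    rw [hcast]
    generalize aa l = A
    generalize bb (m+1) = B
    have d1 : ((l:ℝ)+1) ≠ 0 := by positivity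
    have d2 : ((l:ℝ)+2/3) ≠ 0 := by positivity
    have d3 : ((m:ℝ)+1+1) ≠ 0 := by positivity
    have d4 : ((m:ℝ)+1+4/3) ≠ 0 := by positivity
    have d5 : ((l:ℝ)+(m:ℝ)+1+1) ≠ 0 := by positivity
    field_simp
    ring

lemma key (n : ℕ) : ∑ k ∈ range (n+1), RR n k = 1 := by
  induction n with
  | zero => norm_num [RR, aa, bb]
  | succ n ih =>
    rw [sum_range_succ]
    have hsplit : ∑ k ∈ range (n+1), RR (n+1) k
        = ∑ k ∈ range (n+1), RR n k + ∑ k ∈ range (n+1), (RR (n+1) k - RR n k) := by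
      rw [← sum_add_distrib]; apply sum_congr rfl; intros; ring
    rw [hsplit, ih, tel n n le_rfl]
    have hRn : RR (n+1) (n+1) = bb (n+1) * (3*(n:ℝ)+4) := by
      simp only [RR, Nat.sub_self]
      rw [show aa 0 = 1 from rfl]; push_cast; ring
    rw [hRn, Nat.sub_self, show aa 0 = 1 from rfl]
    have hn1 : ((n:ℝ)+1) ≠ 0 := by positivity
    field_simp
    ring

lemma keyR (n : ℕ) :
    ∑ kl ∈ antidiagonal n, aa kl.2 * bb kl.1 * (6*(kl.1:ℝ)+1-3*(n:ℝ)) = 1 := by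
  rw [Finset.Nat.sum_antidiagonal_eq_sum_range_succ
    (f := fun k l => aa l * bb k * (6*(k:ℝ)+1-3*(n:ℝ)))]
  exact key n

lemma keyC (n : ℕ) :
    ∑ kl ∈ antidiagonal n,
      ((bb kl.1 : ℂ) * (aa kl.2 : ℂ) * (3*(kl.1:ℂ)+1) - (bb kl.1 : ℂ) * (aa kl.2 : ℂ) * (3*(kl.2:ℂ))) = 1 := by
  have h := keyR n
  have hc : ∑ kl ∈ antidiagonal n,
      ((bb kl.1 : ℂ) * (aa kl.2 : ℂ) * (3*(kl.1:ℂ)+1) - (bb kl.1 : ℂ) * (aa kl.2 : ℂ) * (3*(kl.2:ℂ)))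
      = ((∑ kl ∈ antidiagonal n, aa kl.2 * bb kl.1 * (6*(kl.1:ℝ)+1-3*(n:ℝ)) : ℝ) : ℂ) := by
    push_cast
    apply sum_congr rfl
    intro kl hkl
    have hn : kl.1 + kl.2 = n := Finset.HasAntidiagonal.mem_antidiagonal.1 hkl
    have hn' : (n:ℂ) = (kl.1:ℂ) + (kl.2:ℂ) := by exact_mod_cast congrArg (Nat.cast (R := ℂ)) hn.symm
    rw [hn']
    ring
  rw [hc, h]
  norm_num

/- ## Series functions -/

noncomputable def fG (n : ℕ) (z : ℂ) : ℂ := (aa n : ℂ) * (-1/27)^n * z^(3*n)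
noncomputable def fG' (n : ℕ) (z : ℂ) : ℂ := (aa n : ℂ) * (-1/27)^n * ((3*n : ℕ) * z^(3*n-1))
noncomputable def fT (n : ℕ) (z : ℂ) : ℂ := (bb n : ℂ) * (-1/27)^n * z^(3*n+1)
noncomputable def fT' (n : ℕ) (z : ℂ) : ℂ := (bb n : ℂ) * (-1/27)^n * (((3*n+1 : ℕ) : ℂ) * z^(3*n))

lemma norm_c_pow (n : ℕ) : ‖((-1/27 : ℂ))^n‖ = (1/27)^n := by
  rw [norm_pow]; norm_num

lemma norm_aa (n : ℕ) : ‖((aa n : ℝ) : ℂ)‖ ≤ 1 := by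
  rw [Complex.norm_real, Real.norm_eq_abs, abs_of_pos (aa_pos n)]
  exact aa_le_one n

lemma norm_bb (n : ℕ) : ‖((bb n : ℝ) : ℂ)‖ ≤ 1 := by
  rw [Complex.norm_real, Real.norm_eq_abs, abs_of_pos (bb_pos n)]
  exact bb_le_one n

lemma ubound_summable : Summable (fun n : ℕ => (3*(n:ℝ)+1) * (8/27)^n) := by
  have h1 : Summable (fun n : ℕ => ((n:ℝ))^1 * (8/27)^n) :=
    summable_pow_mul_geometric_of_norm_lt_one 1 (by rw [Real.norm_eq_abs, abs_of_pos (by norm_num)]; norm_num)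
  have h2 : Summable (fun n : ℕ => (8/27:ℝ)^n) := summable_geometric_of_lt_one (by norm_num) (by norm_num)
  apply ((h1.mul_left 3).add h2).congr
  intro n; ring

lemma geo_summable : Summable (fun n : ℕ => ((8:ℝ)/27)^n) :=
  summable_geometric_of_lt_one (by norm_num) (by norm_num)

lemma h8 (n : ℕ) : ((8:ℝ)/27)^n = (1/27)^n * 2^(3*n) := by
  rw [pow_mul, ← mul_pow]; norm_num

lemma fG_deriv (n : ℕ) (z : ℂ) : HasDerivAt (fG n) (fG' n z) z := by
  convert (hasDerivAt_pow (3*n) z).const_mul ((aa n : ℂ) * (-1/27)^n) using 1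
  all_goals first | rfl | simp [fG']

lemma fT_deriv (n : ℕ) (z : ℂ) : HasDerivAt (fT n) (fT' n z) z := by
  convert (hasDerivAt_pow (3*n+1) z).const_mul ((bb n : ℂ) * (-1/27)^n) using 1
  all_goals first | rfl | simp [fT']

lemma fG'_bound (n : ℕ) (z : ℂ) (hz : z ∈ ball (0:ℂ) 2) :
    ‖fG' n z‖ ≤ (3*(n:ℝ)+1) * (8/27)^n := by
  have hz2 : ‖z‖ ≤ 2 := le_of_lt (by simpa using hz)
  calc ‖fG' n z‖ = ‖((aa n : ℝ):ℂ)‖ * (1/27)^n * ((3*(n:ℝ)) * ‖z‖^(3*n-1)) := by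
        rw [fG', norm_mul, norm_mul, norm_c_pow, norm_mul, norm_pow, Complex.norm_natCast]
        push_cast
        ring
    _ ≤ 1 * (1/27)^n * ((3*(n:ℝ)+1) * 2^(3*n)) := by
        have hzz : ‖z‖^(3*n-1) ≤ 2^(3*n) :=
          le_trans (pow_le_pow_left₀ (norm_nonneg z) hz2 _)
            (pow_le_pow_right₀ (by norm_num) (Nat.sub_le _ _))
        gcongr ?_ * _ * (?_ * ?_) <;> first | exact norm_aa n | exact hzz | linarith
    _ = (3*(n:ℝ)+1) * (8/27)^n := by rw [h8]; ring

lemma fT'_bound (n : ℕ) (z : ℂ) (hz : z ∈ ball (0:ℂ) 2) :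
    ‖fT' n z‖ ≤ (3*(n:ℝ)+1) * (8/27)^n := by
  have hz2 : ‖z‖ ≤ 2 := le_of_lt (by simpa using hz)
  calc ‖fT' n z‖ = ‖((bb n : ℝ):ℂ)‖ * (1/27)^n * ((3*(n:ℝ)+1) * ‖z‖^(3*n)) := by
        rw [fT', norm_mul, norm_mul, norm_c_pow, norm_mul, norm_pow, Complex.norm_natCast]
        push_cast
        ring
    _ ≤ 1 * (1/27)^n * ((3*(n:ℝ)+1) * 2^(3*n)) := by
        have hzz : ‖z‖^(3*n) ≤ 2^(3*n) := pow_le_pow_left₀ (norm_nonneg z) hz2 _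
        gcongr ?_ * _ * (_ * ?_) <;> first | exact norm_bb n | exact hzz
    _ = (3*(n:ℝ)+1) * (8/27)^n := by rw [h8]; ring

lemma fG_bound (n : ℕ) (z : ℂ) (hz : z ∈ ball (0:ℂ) 2) :
    ‖fG n z‖ ≤ (8/27)^n := by
  have hz2 : ‖z‖ ≤ 2 := le_of_lt (by simpa using hz)
  calc ‖fG n z‖ = ‖((aa n : ℝ):ℂ)‖ * (1/27)^n * ‖z‖^(3*n) := by
        rw [fG, norm_mul, norm_mul, norm_c_pow, norm_pow]
    _ ≤ 1 * (1/27)^n * 2^(3*n) := by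
        gcongr ?_ * _ * ?_
        · exact norm_aa n
        · exact pow_le_pow_left₀ (norm_nonneg z) hz2 _
    _ = (8/27)^n := by rw [h8]; ring

lemma fT_bound (n : ℕ) (z : ℂ) (hz : z ∈ ball (0:ℂ) 2) :
    ‖fT n z‖ ≤ 2 * (8/27)^n := by
  have hz2 : ‖z‖ ≤ 2 := le_of_lt (by simpa using hz)
  calc ‖fT n z‖ = ‖((bb n : ℝ):ℂ)‖ * (1/27)^n * ‖z‖^(3*n+1) := by
        rw [fT, norm_mul, norm_mul, norm_c_pow, norm_pow]
    _ ≤ 1 * (1/27)^n * 2^(3*n+1) := by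
        gcongr ?_ * _ * ?_
        · exact norm_bb n
        · exact pow_le_pow_left₀ (norm_nonneg z) hz2 _
    _ = 2 * (8/27)^n := by rw [h8]; ring

lemma sum_norm_fG (z : ℂ) (hz : z ∈ ball (0:ℂ) 2) : Summable (fun n => ‖fG n z‖) :=
  Summable.of_nonneg_of_le (fun n => norm_nonneg _) (fun n => fG_bound n z hz) geo_summable

lemma sum_norm_fT (z : ℂ) (hz : z ∈ ball (0:ℂ) 2) : Summable (fun n => ‖fT n z‖) :=
  Summable.of_nonneg_of_le (fun n => norm_nonneg _) (fun n => fT_bound n z hz) (geo_summable.mul_left 2)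

lemma sum_norm_fG' (z : ℂ) (hz : z ∈ ball (0:ℂ) 2) : Summable (fun n => ‖fG' n z‖) :=
  Summable.of_nonneg_of_le (fun n => norm_nonneg _) (fun n => fG'_bound n z hz) ubound_summable

lemma sum_norm_fT' (z : ℂ) (hz : z ∈ ball (0:ℂ) 2) : Summable (fun n => ‖fT' n z‖) :=
  Summable.of_nonneg_of_le (fun n => norm_nonneg _) (fun n => fT'_bound n z hz) ubound_summable

lemma one_mem : (1:ℂ) ∈ ball (0:ℂ) 2 := by
  norm_num [mem_ball]

lemma G_hasDeriv (s : ℂ) (hs : s ∈ ball (0:ℂ) 2) :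
    HasDerivAt (fun z => ∑' n, fG n z) (∑' n, fG' n s) s :=
  hasDerivAt_tsum_of_isPreconnected ubound_summable isOpen_ball
    (convex_ball (0:ℂ) 2).isPreconnected (fun n y _ => fG_deriv n y)
    (fun n y hy => fG'_bound n y hy) one_mem ((sum_norm_fG 1 one_mem).of_norm) hs

lemma T_hasDeriv (s : ℂ) (hs : s ∈ ball (0:ℂ) 2) :
    HasDerivAt (fun z => ∑' n, fT n z) (∑' n, fT' n s) s :=
  hasDerivAt_tsum_of_isPreconnected ubound_summable isOpen_ball
    (convex_ball (0:ℂ) 2).isPreconnected (fun n y _ => fT_deriv n y)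
    (fun n y hy => fT'_bound n y hy) one_mem ((sum_norm_fT 1 one_mem).of_norm) hs

/- ## Wronskian identity -/

lemma wron (s : ℂ) (hs : s ∈ ball (0:ℂ) 2) :
    (∑' n, fT' n s) * (∑' n, fG n s) - (∑' n, fT n s) * (∑' n, fG' n s)
      = (1 - (-(s^3)/27))⁻¹ := by
  have hT' := sum_norm_fT' s hs
  have hG := sum_norm_fG s hs
  have hT := sum_norm_fT s hs
  have hG' := sum_norm_fG' s hs
  rw [tsum_mul_tsum_eq_tsum_sum_antidiagonal_of_summable_norm hT' hG,
      tsum_mul_tsum_eq_tsum_sum_antidiagonal_of_summable_norm hT hG']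
  have hsum1 : Summable (fun n => ∑ kl ∈ antidiagonal n, fT' kl.1 s * fG kl.2 s) :=
    (summable_norm_sum_mul_antidiagonal_of_summable_norm hT' hG).of_norm
  have hsum2 : Summable (fun n => ∑ kl ∈ antidiagonal n, fT kl.1 s * fG' kl.2 s) :=
    (summable_norm_sum_mul_antidiagonal_of_summable_norm hT hG').of_norm
  rw [← Summable.tsum_sub hsum1 hsum2]
  have hterm : ∀ n : ℕ,
      (∑ kl ∈ antidiagonal n, fT' kl.1 s * fG kl.2 s)
        - (∑ kl ∈ antidiagonal n, fT kl.1 s * fG' kl.2 s)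
      = (-(s^3)/27)^n := by
    intro n
    rw [← sum_sub_distrib]
    have hx : (-(s^3)/27)^n = (-1/27)^n * s^(3*n) := by
      rw [show -(s^3)/27 = (-1/27) * s^3 by ring, mul_pow, ← pow_mul]
    have : ∀ kl ∈ antidiagonal n,
        fT' kl.1 s * fG kl.2 s - fT kl.1 s * fG' kl.2 s
          = (-1/27)^n * s^(3*n) *
            ((bb kl.1 : ℂ) * (aa kl.2 : ℂ) * (3*(kl.1:ℂ)+1) - (bb kl.1 : ℂ) * (aa kl.2 : ℂ) * (3*(kl.2:ℂ))) := by
      intro kl hkl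
      have hn : kl.1 + kl.2 = n := Finset.HasAntidiagonal.mem_antidiagonal.1 hkl
      obtain ⟨k, l⟩ := kl
      simp only at hn ⊢
      rcases l with _ | l
      · have hk : k = n := by omega
        subst hk
        simp only [fT', fG, fT, fG', Nat.mul_zero, Nat.cast_zero]
        push_cast
        ring
      · have h3 : 3*(l+1)-1 = 3*l+2 := by omega
        have hn' : n = k + (l + 1) := by omega
        subst hn'
        simp only [fT', fG, fT, fG', h3]
        push_cast
        ring
    rw [sum_congr rfl this, ← mul_sum, keyC n, hx]
    ring
  rw [tsum_congr hterm]
  apply tsum_geometric_of_norm_lt_one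
  have : ‖-(s^3)/27‖ = ‖s‖^3 / 27 := by
    rw [norm_div, norm_neg, norm_pow]
    norm_num
  rw [this]
  have hs2 : ‖s‖ < 2 := by simpa using hs
  have h3 : ‖s‖^3 < 8 := by
    calc ‖s‖^3 < 2^3 := by
          apply pow_lt_pow_left₀ hs2 (norm_nonneg s)
          norm_num
      _ = 8 := by norm_num
  linarith

lemma cast_prod_ne (q : ℝ) (hq : 0 < q) (n : ℕ) :
    (∏ i ∈ range n, ((q:ℂ) + i)) ≠ 0 := by
  apply prod_ne_zero_iff.2
  intro i _
  have h : ((q + i : ℝ) : ℂ) = (q:ℂ) + i := by push_cast; ring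
  rw [← h]
  exact_mod_cast ne_of_gt (by positivity)

lemma coefA (n : ℕ) :
    (∏ i ∈ range n, ((1:ℂ)/3 + i)) * (∏ i ∈ range n, ((1:ℂ)/3 + i)) /
      ((∏ i ∈ range n, ((2:ℂ)/3 + i)) * (n.factorial : ℂ)) = (aa n : ℂ) := by
  induction n with
  | zero => norm_num [aa]
  | succ n ih =>
    have hd : (∏ i ∈ range n, ((2:ℂ)/3 + i)) ≠ 0 := by
      have := cast_prod_ne (2/3) (by norm_num) n
      convert this using 2 with i
      norm_num
    have hf : ((n.factorial : ℂ)) ≠ 0 := Nat.cast_ne_zero.2 n.factorial_ne_zero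
    have hd2 : ((2:ℂ)/3 + n) ≠ 0 := by
      have h : (((2/3 + n : ℝ)) : ℂ) = (2:ℂ)/3 + n := by push_cast; ring
      rw [← h]; exact Complex.ofReal_ne_zero.2 (ne_of_gt (by positivity))
    have hn1 : ((n:ℂ) + 1) ≠ 0 := by
      have h : (((n + 1 : ℝ)) : ℂ) = (n:ℂ) + 1 := by push_cast; ring
      rw [← h]; exact Complex.ofReal_ne_zero.2 (ne_of_gt (by positivity))
    have haaR : aa (n+1) * (((n:ℝ)+1) * ((n:ℝ)+2/3)) = aa n * ((n:ℝ)+1/3)^2 := by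
      rw [show aa (n+1) = aa n * ((n:ℝ) + 1/3)^2 / (((n:ℝ)+1) * ((n:ℝ) + 2/3)) from rfl]
      field_simp
    have haa : (aa (n+1) : ℂ) * (((n:ℂ)+1) * ((n:ℂ)+2/3)) = (aa n : ℂ) * ((n:ℂ)+1/3)^2 := by
      have := congrArg (Complex.ofReal) haaR
      push_cast at this
      exact this
    rw [prod_range_succ, prod_range_succ, Nat.factorial_succ]
    rw [div_eq_iff (by push_cast; exact mul_ne_zero (mul_ne_zero hd hd2) (mul_ne_zero hn1 hf))]
    rw [div_eq_iff (mul_ne_zero hd hf)] at ih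
    push_cast
    linear_combination (((1:ℂ)/3 + n))^2 * ih - ((∏ i ∈ range n, ((2:ℂ)/3 + i)) * (n.factorial:ℂ)) * haa
lemma coefB (n : ℕ) :
    (∏ i ∈ range n, ((2:ℂ)/3 + i)) * (∏ i ∈ range n, ((2:ℂ)/3 + i)) /
      ((∏ i ∈ range n, ((4:ℂ)/3 + i)) * (n.factorial : ℂ)) = (bb n : ℂ) := by
  induction n with
  | zero => norm_num [bb]
  | succ n ih =>
    have hd : (∏ i ∈ range n, ((4:ℂ)/3 + i)) ≠ 0 := by
      have := cast_prod_ne (4/3) (by norm_num) n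
      convert this using 2 with i
      norm_num
    have hf : ((n.factorial : ℂ)) ≠ 0 := Nat.cast_ne_zero.2 n.factorial_ne_zero
    have hd2 : ((4:ℂ)/3 + n) ≠ 0 := by
      have h : (((4/3 + n : ℝ)) : ℂ) = (4:ℂ)/3 + n := by push_cast; ring
      rw [← h]; exact Complex.ofReal_ne_zero.2 (ne_of_gt (by positivity))
    have hn1 : ((n:ℂ) + 1) ≠ 0 := by
      have h : (((n + 1 : ℝ)) : ℂ) = (n:ℂ) + 1 := by push_cast; ring
      rw [← h]; exact Complex.ofReal_ne_zero.2 (ne_of_gt (by positivity))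
    have haaR : bb (n+1) * (((n:ℝ)+1) * ((n:ℝ)+4/3)) = bb n * ((n:ℝ)+2/3)^2 := by
      rw [show bb (n+1) = bb n * ((n:ℝ) + 2/3)^2 / (((n:ℝ)+1) * ((n:ℝ) + 4/3)) from rfl]
      field_simp
    have haa : (bb (n+1) : ℂ) * (((n:ℂ)+1) * ((n:ℂ)+4/3)) = (bb n : ℂ) * ((n:ℂ)+2/3)^2 := by
      have := congrArg (Complex.ofReal) haaR
      push_cast at this
      exact this
    rw [prod_range_succ, prod_range_succ, Nat.factorial_succ]
    rw [div_eq_iff (by push_cast; exact mul_ne_zero (mul_ne_zero hd hd2) (mul_ne_zero hn1 hf))]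
    rw [div_eq_iff (mul_ne_zero hd hf)] at ih
    push_cast
    linear_combination (((2:ℂ)/3 + n))^2 * ih - ((∏ i ∈ range n, ((4:ℂ)/3 + i)) * (n.factorial:ℂ)) * haa


lemma EG (z : ℂ) : hyp2F1 (1/3) (1/3) (2/3) (-(z^3)/27) = ∑' n, fG n z := by
  unfold hyp2F1
  apply tsum_congr
  intro n
  rw [coefA n, fG]
  rw [show -(z^3)/27 = (-1/27 : ℂ) * z^3 by ring, mul_pow, ← pow_mul]
  ring

lemma ET (z : ℂ) : z * hyp2F1 (2/3) (2/3) (4/3) (-(z^3)/27) = ∑' n, fT n z := by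
  unfold hyp2F1
  rw [← tsum_mul_left]
  apply tsum_congr
  intro n
  rw [coefB n, fT]
  rw [show -(z^3)/27 = (-1/27 : ℂ) * z^3 by ring, mul_pow, ← pow_mul]
  ring

/-- With `g(u) = ₂F₁(1/3,1/3,2/3;u)`, `h(u) = ₂F₁(2/3,2/3,4/3;u)` and
`t(s) = s·h(u)/g(u)` where `u = -s³/27`, one has `dt/ds = 1/((1-u)·g(u)²)`
for `s` near `0`. -/
theorem stmt14 :
    ∃ ε > (0 : ℝ), ∀ s : ℂ, ‖s‖ < ε →
      HasDerivAt
        (fun z : ℂ => z * hyp2F1 (2/3) (2/3) (4/3) (-(z ^ 3) / 27) /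
          hyp2F1 (1/3) (1/3) (2/3) (-(z ^ 3) / 27))
        (1 / ((1 - (-(s ^ 3) / 27)) * (hyp2F1 (1/3) (1/3) (2/3) (-(s ^ 3) / 27)) ^ 2))
        s := by
  refine ⟨1, one_pos, ?_⟩
  intro s hs
  have hs1 : ‖s‖ ≤ 1 := le_of_lt hs
  have hs2 : s ∈ ball (0:ℂ) 2 := by
    rw [mem_ball_zero_iff]
    linarith
  have hfun : (fun z : ℂ => z * hyp2F1 (2/3) (2/3) (4/3) (-(z ^ 3) / 27) /
      hyp2F1 (1/3) (1/3) (2/3) (-(z ^ 3) / 27))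
      = fun z => (∑' n, fT n z) / (∑' n, fG n z) := by
    funext z
    rw [ET z, EG z]
  have hsum : Summable (fun n => fG n s) := (sum_norm_fG s hs2).of_norm
  have hshift : Summable (fun n => ‖fG (n+1) s‖) :=
    (summable_nat_add_iff (f := fun n => ‖fG n s‖) 1).2 (sum_norm_fG s hs2)
  have htail0 : ∀ n : ℕ, ‖fG (n+1) s‖ ≤ (1/27) * (1/27:ℝ)^n := by
    intro n
    calc ‖fG (n+1) s‖ = ‖((aa (n+1) : ℝ):ℂ)‖ * (1/27)^(n+1) * ‖s‖^(3*(n+1)) := by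
          rw [fG, norm_mul, norm_mul, norm_c_pow, norm_pow]
      _ ≤ 1 * (1/27)^(n+1) * 1 := by
          gcongr ?_ * _ * ?_
          · exact norm_aa _
          · exact pow_le_one₀ (norm_nonneg s) hs1
      _ = (1/27) * (1/27:ℝ)^n := by ring
  have hGeq : (∑' n, fG n s) = 1 + ∑' n, fG (n+1) s := by
    rw [Summable.tsum_eq_zero_add hsum]
    congr 1
    simp [fG, show aa 0 = 1 from rfl]
  have htail : ‖∑' n, fG (n+1) s‖ < 1 := by
    calc ‖∑' n, fG (n+1) s‖ ≤ ∑' n, ‖fG (n+1) s‖ := norm_tsum_le_tsum_norm hshift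
      _ ≤ ∑' n : ℕ, (1/27) * (1/27:ℝ)^n := by
          apply Summable.tsum_le_tsum htail0 hshift
          exact (summable_geometric_of_lt_one (by norm_num) (by norm_num)).mul_left _
      _ = (1/27) * (1-1/27:ℝ)⁻¹ := by
          rw [tsum_mul_left, tsum_geometric_of_lt_one (by norm_num) (by norm_num)]
      _ < 1 := by norm_num
  have hGne : (∑' n, fG n s) ≠ 0 := by
    intro h0
    rw [hGeq] at h0
    have hx : (∑' n, fG (n+1) s) = -1 := by linear_combination h0
    rw [hx] at htail
    norm_num at htail
  have hd := (T_hasDeriv s hs2).div (G_hasDeriv s hs2) hGne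
  rw [hfun]
  convert hd using 1
  all_goals try rfl
  rw [wron s hs2, EG s]
  rw [one_div, mul_inv]
  ring
end
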